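/- Let a, ε > 0 and m ≥ 0, and define φ̃ : ℝ → ℝ by φ̃(t) = m + 1/(2√(ε² + t²)). Then, writing φ̃′ and φ̃″ for the first and second derivatives of φ̃, the quantity 2(φ̃′(0))²·a⁶ − a·φ̃″(0)·a⁴ − φ̃(0)·φ̃″(0)·a⁶ − 2a² − 2a·φ̃(0)·a² equals F(a, ε, m) := −2a² − 2a³m − a³/ε + a⁵/(2ε³) + m·a⁶/(2ε³) + a⁶/(4ε⁴). Moreover: (i) for every fixed a > 0 and m ≥ 0 there exists ε₀ > 0 such that F(a, ε, m) > 0 for all 0 < ε < ε₀; and (ii) for every fixed ε > 0 and m ≥ 0 there exists a₀ > 0 such that F(a, ε, m) > 0 for all a > a₀. -/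

import Mathlib

/-- The quantity `F(a, ε, m)` controlling the sign of `M + N` at the midpoint of the
segment in the three-point configuration `p₁ = (0,0,a)`, `p₂ = (0,0,−a)`, `p₃ = (0,ε,0)`. -/
noncomputable def stmtF (a ε m : ℝ) : ℝ :=
  -2 * a ^ 2 - 2 * a ^ 3 * m - a ^ 3 / ε + a ^ 5 / (2 * ε ^ 3)
    + m * a ^ 6 / (2 * ε ^ 3) + a ^ 6 / (4 * ε ^ 4)

lemma aux_hasDerivAt1 (ε m : ℝ) (hε : 0 < ε) (t : ℝ) :
    HasDerivAt (fun t : ℝ => m + 1 / (2 * Real.sqrt (ε ^ 2 + t ^ 2)))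
      (-t / (2 * (ε ^ 2 + t ^ 2) * Real.sqrt (ε ^ 2 + t ^ 2))) t := by
  have hpos : 0 < ε ^ 2 + t ^ 2 := by positivity
  have hs : 0 < Real.sqrt (ε ^ 2 + t ^ 2) := Real.sqrt_pos.2 hpos
  have hsq : Real.sqrt (ε ^ 2 + t ^ 2) ^ 2 = ε ^ 2 + t ^ 2 := Real.sq_sqrt hpos.le
  have hu : HasDerivAt (fun t : ℝ => Real.sqrt (ε ^ 2 + t ^ 2))
      ((2 * t) / (2 * Real.sqrt (ε ^ 2 + t ^ 2))) t := by
    have hin : HasDerivAt (fun t : ℝ => ε ^ 2 + t ^ 2) (2 * t) t := by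
      simpa using (hasDerivAt_pow 2 t).const_add (ε ^ 2)
    exact hin.sqrt hpos.ne'
  have hd : HasDerivAt (fun t : ℝ => 2 * Real.sqrt (ε ^ 2 + t ^ 2))
      (2 * ((2 * t) / (2 * Real.sqrt (ε ^ 2 + t ^ 2)))) t := hu.const_mul 2
  have h := ((hasDerivAt_const t (1:ℝ)).div hd (by positivity)).const_add m
  convert h using 1
  · rfl
  · rfl
  · rfl
  have h4 : (2 * Real.sqrt (ε ^ 2 + t ^ 2)) ^ 2 = 4 * (ε ^ 2 + t ^ 2) := by
    rw [mul_pow, hsq]; ring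
  rw [h4]
  field_simp
  ring

lemma aux_hasDerivAt2 (ε : ℝ) (hε : 0 < ε) :
    HasDerivAt (fun t : ℝ => -t / (2 * (ε ^ 2 + t ^ 2) * Real.sqrt (ε ^ 2 + t ^ 2)))
      (-1 / (2 * ε ^ 3)) 0 := by
  have hs0 : Real.sqrt (ε ^ 2 + 0 ^ 2) = ε := by
    simp [Real.sqrt_sq hε.le]
  have hu : HasDerivAt (fun t : ℝ => Real.sqrt (ε ^ 2 + t ^ 2))
      ((2 * (0:ℝ)) / (2 * Real.sqrt (ε ^ 2 + (0:ℝ) ^ 2))) 0 := by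
    have hin : HasDerivAt (fun t : ℝ => ε ^ 2 + t ^ 2) (2 * (0:ℝ)) 0 := by
      simpa using (hasDerivAt_pow 2 (0:ℝ)).const_add (ε ^ 2)
    exact hin.sqrt (by positivity)
  have hc : HasDerivAt (fun t : ℝ => 2 * (ε ^ 2 + t ^ 2)) (2 * (2 * (0:ℝ))) 0 := by
    have hin : HasDerivAt (fun t : ℝ => ε ^ 2 + t ^ 2) (2 * (0:ℝ)) 0 := by
      simpa using (hasDerivAt_pow 2 (0:ℝ)).const_add (ε ^ 2)
    exact hin.const_mul 2
  have hD : HasDerivAt (fun t : ℝ => 2 * (ε ^ 2 + t ^ 2) * Real.sqrt (ε ^ 2 + t ^ 2))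
      (2 * (2 * (0:ℝ)) * Real.sqrt (ε ^ 2 + (0:ℝ) ^ 2)
        + 2 * (ε ^ 2 + (0:ℝ) ^ 2) * ((2 * (0:ℝ)) / (2 * Real.sqrt (ε ^ 2 + (0:ℝ) ^ 2)))) 0 :=
    hc.mul hu
  have hn : HasDerivAt (fun t : ℝ => -t) (-1 : ℝ) 0 := (hasDerivAt_id 0).neg
  have hD0 : (2 * (ε ^ 2 + (0:ℝ) ^ 2) * Real.sqrt (ε ^ 2 + (0:ℝ) ^ 2)) ≠ 0 := by
    rw [hs0]; positivity
  have h := hn.div hD hD0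
  convert h using 1
  · rfl
  · rfl
  · rfl
  rw [hs0]
  field_simp
  ring

/-- **Failure of strong stability for the three-point configuration.**
With `φ̃(t) = m + 1/(2√(ε² + t²))`, the midpoint value of `M + N` equals `F(a, ε, m)`;
moreover `F(a, ε, m) > 0` for `ε` small (with `a, m` fixed) and for `a` large
(with `ε, m` fixed). -/
theorem stmt_10 :
    (∀ a ε m : ℝ, 0 < a → 0 < ε → 0 ≤ m →
      (2 * (deriv (fun t : ℝ => m + 1 / (2 * Real.sqrt (ε ^ 2 + t ^ 2))) 0) ^ 2 * a ^ 6
        - a * deriv (deriv (fun t : ℝ => m + 1 / (2 * Real.sqrt (ε ^ 2 + t ^ 2)))) 0 * a ^ 4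
        - (m + 1 / (2 * Real.sqrt (ε ^ 2 + (0 : ℝ) ^ 2)))
            * deriv (deriv (fun t : ℝ => m + 1 / (2 * Real.sqrt (ε ^ 2 + t ^ 2)))) 0 * a ^ 6
        - 2 * a ^ 2
        - 2 * a * (m + 1 / (2 * Real.sqrt (ε ^ 2 + (0 : ℝ) ^ 2))) * a ^ 2)
        = stmtF a ε m) ∧
    (∀ a m : ℝ, 0 < a → 0 ≤ m → ∃ ε₀ > 0, ∀ ε : ℝ, 0 < ε → ε < ε₀ → stmtF a ε m > 0) ∧
    (∀ ε m : ℝ, 0 < ε → 0 ≤ m → ∃ a₀ > 0, ∀ a : ℝ, a > a₀ → stmtF a ε m > 0) := by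
  have key : ∀ a ε m : ℝ, 0 < a → 0 < ε → 0 ≤ m → 2 * ε < a → stmtF a ε m > 0 := by
    intro a ε m ha hε hm hlt
    have h2 : a ^ 2 > 4 * ε ^ 2 := by nlinarith
    have h3 : a ^ 3 > 8 * ε ^ 3 := by nlinarith
    have h4 : a ^ 4 > 16 * ε ^ 4 := by nlinarith
    have hG : 0 < -8*a^2*ε^4 - 8*a^3*m*ε^4 - 4*a^3*ε^3 + 2*a^5*ε + 2*m*a^6*ε + a^6 := by
      nlinarith [mul_pos (pow_pos ha 2) (sub_pos.2 h4),
        mul_pos (pow_pos ha 3) (sub_pos.2 h3),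
        mul_nonneg (mul_nonneg hm hε.le)
          (mul_nonneg (pow_pos ha 3).le (by nlinarith : (0:ℝ) ≤ a ^ 3 - 4 * ε ^ 3)),
        mul_pos (pow_pos ha 5) hε]
    have heq : stmtF a ε m =
        (-8*a^2*ε^4 - 8*a^3*m*ε^4 - 4*a^3*ε^3 + 2*a^5*ε + 2*m*a^6*ε + a^6) / (4 * ε ^ 4) := by
      unfold stmtF; field_simp; ring
    rw [heq]
    exact div_pos hG (by positivity)
  refine ⟨?_, ?_, ?_⟩
  · intro a ε m ha hε hm
    have hs0 : Real.sqrt (ε ^ 2 + (0:ℝ) ^ 2) = ε := by simp [Real.sqrt_sq hε.le]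
    have hder : deriv (fun t : ℝ => m + 1 / (2 * Real.sqrt (ε ^ 2 + t ^ 2)))
        = fun t : ℝ => -t / (2 * (ε ^ 2 + t ^ 2) * Real.sqrt (ε ^ 2 + t ^ 2)) := by
      funext t; exact (aux_hasDerivAt1 ε m hε t).deriv
    have h1 : deriv (fun t : ℝ => m + 1 / (2 * Real.sqrt (ε ^ 2 + t ^ 2))) 0 = 0 := by
      rw [hder]; simp
    have h2 : deriv (deriv (fun t : ℝ => m + 1 / (2 * Real.sqrt (ε ^ 2 + t ^ 2)))) 0
        = -1 / (2 * ε ^ 3) := by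
      rw [hder]; exact (aux_hasDerivAt2 ε hε).deriv
    rw [h1, h2, hs0]
    unfold stmtF
    field_simp
    ring
  · intro a m ha hm
    exact ⟨a / 2, by positivity, fun ε hε hlt => key a ε m ha hε hm (by linarith)⟩
  · intro ε m hε hm
    exact ⟨2 * ε, by positivity, fun a hlt => key a ε m (by linarith) hε hm hlt⟩
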